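/- Let d ≥ 1 and let Δ be a real number with 0 < Δ < d/2. For every λ > 0 and all Schwartz functions f, g : EuclideanSpace ℝ (Fin d) → ℂ, define the rescaled test functions f_λ(x) = λ^(Δ−d) · f(λ⁻¹ • x) and g_λ(x) = λ^(Δ−d) · g(λ⁻¹ • x). Then the non-cut-off covariance is scale invariant: ∫ conj(f̂_λ(ξ)) ĝ_λ(ξ) ‖ξ‖^(−(d−2Δ)) dξ = ∫ conj(f̂(ξ)) ĝ(ξ) ‖ξ‖^(−(d−2Δ)) dξ. -/

import Mathlib

open MeasureTheory SchwartzMap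
open scoped FourierTransform RealInnerProductSpace

section aux

variable {d : ℕ}

local notation "E" => EuclideanSpace ℝ (Fin d)

/-- Fourier transform of a dilated and scaled function. -/
lemma fourier_dilate (c : ℂ) (lam : ℝ) (hlam : 0 < lam) (f : E → ℂ) (ξ : E) :
    𝓕 (fun x => c * f (lam⁻¹ • x)) ξ = c * ((lam ^ d : ℝ) : ℂ) * 𝓕 f (lam • ξ) := by
  rw [Real.fourier_eq, Real.fourier_eq]
  have key : ∀ x : E, (𝐞 (-(inner ℝ x ξ : ℝ)) : Circle) • (c * f (lam⁻¹ • x))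
      = (fun y : E => (𝐞 (-(inner ℝ y (lam • ξ) : ℝ)) : Circle) • (c * f y)) (lam⁻¹ • x) := by
    intro x
    simp only [real_inner_smul_left, real_inner_smul_right]
    rw [← mul_assoc, mul_inv_cancel₀ hlam.ne', one_mul]
  simp_rw [key]
  rw [MeasureTheory.Measure.integral_comp_inv_smul_of_nonneg volume
    (fun y : E => (𝐞 (-(inner ℝ y (lam • ξ) : ℝ)) : Circle) • (c * f y)) hlam.le,
    finrank_euclideanSpace_fin, Complex.real_smul, ← MeasureTheory.integral_const_mul,
    ← MeasureTheory.integral_const_mul]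
  apply congrArg
  funext y
  simp only [Circle.smul_def, smul_eq_mul]
  push_cast
  ring

end aux

/-- Scale invariance of the non-cut-off covariance of the fractional Gaussian field: for
`0 < Δ < d/2`, `λ > 0` and Schwartz functions `f, g` on `d`-dimensional Euclidean space,
with rescaled test functions `f_λ(x) = λ^(Δ−d) f(λ⁻¹ x)` and `g_λ(x) = λ^(Δ−d) g(λ⁻¹ x)`,
one has `C₋∞(f_λ, g_λ) = C₋∞(f, g)` where
`C₋∞(f,g) = ∫ conj (𝓕f ξ) 𝓕g ξ ‖ξ‖^(−(d−2Δ)) dξ`. -/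
theorem fgf_covariance_scale_invariant
    (d : ℕ) (hd : 1 ≤ d) (Δ : ℝ) (hΔ : 0 < Δ) (hΔd : Δ < d / 2)
    (lam : ℝ) (hlam : 0 < lam)
    (f g : SchwartzMap (EuclideanSpace ℝ (Fin d)) ℂ)
    (flam glam : EuclideanSpace ℝ (Fin d) → ℂ)
    (hflam : ∀ x, flam x = ((lam ^ (Δ - (d : ℝ)) : ℝ) : ℂ) * f (lam⁻¹ • x))
    (hglam : ∀ x, glam x = ((lam ^ (Δ - (d : ℝ)) : ℝ) : ℂ) * g (lam⁻¹ • x)) :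
    (∫ ξ : EuclideanSpace ℝ (Fin d),
        (starRingEnd ℂ) (𝓕 flam ξ) * 𝓕 glam ξ * ((‖ξ‖ ^ (-((d : ℝ) - 2 * Δ)) : ℝ) : ℂ))
      = ∫ ξ : EuclideanSpace ℝ (Fin d),
          (starRingEnd ℂ) (𝓕 (⇑f) ξ) * 𝓕 (⇑g) ξ * ((‖ξ‖ ^ (-((d : ℝ) - 2 * Δ)) : ℝ) : ℂ) := by
  have hfl : flam = fun x => ((lam ^ (Δ - (d : ℝ)) : ℝ) : ℂ) * f (lam⁻¹ • x) := funext hflam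
  have hgl : glam = fun x => ((lam ^ (Δ - (d : ℝ)) : ℝ) : ℂ) * g (lam⁻¹ • x) := funext hglam
  set c : ℝ := lam ^ (Δ - (d : ℝ)) with hc
  set Φ : EuclideanSpace ℝ (Fin d) → ℂ := fun η =>
    (starRingEnd ℂ) (𝓕 (⇑f) η) * 𝓕 (⇑g) η * ((‖η‖ ^ (-((d : ℝ) - 2 * Δ)) : ℝ) : ℂ) with hΦ
  have key : ∀ ξ : EuclideanSpace ℝ (Fin d),
      (starRingEnd ℂ) (𝓕 flam ξ) * 𝓕 glam ξ * ((‖ξ‖ ^ (-((d : ℝ) - 2 * Δ)) : ℝ) : ℂ)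
        = ((lam ^ d : ℝ) : ℂ) * Φ (lam • ξ) := by
    intro ξ
    rw [hfl, hgl, fourier_dilate _ lam hlam, fourier_dilate _ lam hlam]
    have hnorm : ‖ξ‖ ^ (-((d : ℝ) - 2 * Δ))
        = lam ^ ((d : ℝ) - 2 * Δ) * ‖lam • ξ‖ ^ (-((d : ℝ) - 2 * Δ)) := by
      rw [norm_smul, Real.norm_eq_abs, abs_of_pos hlam,
        Real.mul_rpow hlam.le (norm_nonneg ξ), ← mul_assoc,
        ← Real.rpow_add hlam]
      simp
    rw [hnorm]
    simp only [hΦ, map_mul, Complex.conj_ofReal]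
    push_cast
    have hpow : (lam ^ (Δ - (d : ℝ)) * lam ^ (Δ - (d : ℝ))) * ((lam : ℝ) ^ d * (lam : ℝ) ^ d)
        * lam ^ ((d : ℝ) - 2 * Δ) = lam ^ d := by
      rw [← Real.rpow_natCast lam d, ← Real.rpow_add hlam, ← Real.rpow_add hlam,
        ← Real.rpow_add hlam, ← Real.rpow_add hlam]
      ring_nf
    calc ((lam ^ (Δ - (d : ℝ)) : ℝ) : ℂ) * ((lam : ℂ) ^ d)
          * (starRingEnd ℂ) (𝓕 (⇑f) (lam • ξ))
          * (((lam ^ (Δ - (d : ℝ)) : ℝ) : ℂ) * (lam : ℂ) ^ d * 𝓕 (⇑g) (lam • ξ))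
          * (((lam ^ ((d : ℝ) - 2 * Δ) : ℝ) : ℂ)
            * ((‖lam • ξ‖ ^ (-((d : ℝ) - 2 * Δ)) : ℝ) : ℂ))
        = ((((lam ^ (Δ - (d : ℝ)) * lam ^ (Δ - (d : ℝ))) * ((lam : ℝ) ^ d * (lam : ℝ) ^ d)
            * lam ^ ((d : ℝ) - 2 * Δ) : ℝ)) : ℂ)
          * ((starRingEnd ℂ) (𝓕 (⇑f) (lam • ξ)) * 𝓕 (⇑g) (lam • ξ)
            * ((‖lam • ξ‖ ^ (-((d : ℝ) - 2 * Δ)) : ℝ) : ℂ)) := by push_cast; ring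
      _ = _ := by rw [hpow]; push_cast; ring
  simp_rw [key]
  rw [MeasureTheory.integral_const_mul,
    MeasureTheory.Measure.integral_comp_smul_of_nonneg volume Φ lam (hR := hlam.le),
    finrank_euclideanSpace_fin]
  rw [Complex.real_smul, ← mul_assoc, ← Complex.ofReal_mul,
    mul_inv_cancel₀ (by positivity : (lam : ℝ) ^ d ≠ 0), Complex.ofReal_one, one_mul]
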